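/- Let A be a real symmetric m×m matrix (m ≥ 1) and B a real symmetric n×n matrix (n ≥ 1). Let a, b ∈ ℝ and suppose that every eigenvalue of A lies in the interval [a, 1] and that both a and 1 are eigenvalues of A, and likewise every eigenvalue of B lies in [b, 1] and both b and 1 are eigenvalues of B. Then the smallest eigenvalue of the Kronecker product A ⊗ B equals a·b if a ≥ 0 and b ≥ 0, and equals min(a, b) otherwise. -/

import Mathlib

open Kronecker
open Matrix

/-- `l` is a (real) eigenvalue of the square real matrix `M`: there is a nonzero vector `v`
with `M·v = l·v`. -/
def Matrix.HasRealEigenvalue {n : Type*} [Fintype n] (M : Matrix n n ℝ) (l : ℝ) : Prop :=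
  ∃ v : n → ℝ, v ≠ 0 ∧ M.mulVec v = l • v

section Aux

variable {k : Type*} [Fintype k] [DecidableEq k]

lemma aux_isHermitian {M : Matrix k k ℝ} (h : M.IsSymm) : M.IsHermitian := by
  ext i j
  simpa [Matrix.conjTranspose_apply] using congrFun (congrFun h i) j

lemma aux_herm_smul_one (r : ℝ) : ((r • (1 : Matrix k k ℝ))).IsHermitian := by
  rw [Matrix.IsHermitian, Matrix.conjTranspose_smul, star_trivial, Matrix.conjTranspose_one]

lemma aux_eig_mem (M : Matrix k k ℝ) (hs : M.IsHermitian) (i : k) :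
    M.HasRealEigenvalue (hs.eigenvalues i) := by
  refine ⟨hs.eigenvectorBasis i, ?_, hs.mulVec_eigenvectorBasis i⟩
  intro h
  apply hs.eigenvectorBasis.orthonormal.ne_zero i
  ext j
  exact congrFun h j

lemma aux_psd_of_eig {M : Matrix k k ℝ} (hs : M.IsHermitian)
    (h : ∀ l, M.HasRealEigenvalue l → 0 ≤ l) : M.PosSemidef :=
  hs.posSemidef_iff_eigenvalues_nonneg.mpr fun i => h _ (aux_eig_mem M hs i)

lemma aux_eq_zero_of_eig {M : Matrix k k ℝ} (hs : M.IsHermitian)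
    (h : ∀ l, M.HasRealEigenvalue l → l = 0) : M = 0 := by
  have he : (RCLike.ofReal ∘ hs.eigenvalues : k → ℝ) = 0 := by
    funext i
    simpa using h _ (aux_eig_mem M hs i)
  have h0 : (0 : k → ℝ) = fun _ => 0 := rfl
  rw [hs.spectral_theorem, he, h0, Matrix.diagonal_zero, map_zero]

lemma aux_shift {M : Matrix k k ℝ} {c l : ℝ}
    (h : (M - c • 1).HasRealEigenvalue l) : M.HasRealEigenvalue (l + c) := by
  obtain ⟨v, hv0, hv⟩ := h
  rw [Matrix.sub_mulVec, Matrix.smul_mulVec, Matrix.one_mulVec, sub_eq_iff_eq_add] at hv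
  refine ⟨v, hv0, ?_⟩
  rw [hv, add_smul]

lemma aux_shift2 {M : Matrix k k ℝ} {l : ℝ}
    (h : ((1 : Matrix k k ℝ) - M).HasRealEigenvalue l) : M.HasRealEigenvalue (1 - l) := by
  obtain ⟨v, hv0, hv⟩ := h
  rw [Matrix.sub_mulVec, Matrix.one_mulVec] at hv
  refine ⟨v, hv0, ?_⟩
  rw [sub_smul, one_smul, ← hv]
  abel

lemma aux_eig_ge {M : Matrix k k ℝ} {c l : ℝ}
    (h : (M - c • 1).PosSemidef) (hl : M.HasRealEigenvalue l) : c ≤ l := by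
  obtain ⟨v, hv0, hv⟩ := hl
  have h2 := h.dotProduct_mulVec_nonneg v
  rw [Matrix.sub_mulVec, Matrix.smul_mulVec, Matrix.one_mulVec, hv] at h2
  have hsv : star v = v := by
    funext i; simp
  rw [hsv, dotProduct_sub, dotProduct_smul, dotProduct_smul,
    smul_eq_mul, smul_eq_mul] at h2
  have hvv : 0 < dotProduct v v := by
    rcases lt_or_eq_of_le (Finset.sum_nonneg fun i _ => mul_self_nonneg (v i) :
        (0:ℝ) ≤ dotProduct v v) with h' | h'
    · exact h'
    · exact absurd (dotProduct_self_eq_zero.mp h'.symm) hv0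
  nlinarith

lemma aux_psd_smul {M : Matrix k k ℝ} (h : M.PosSemidef) {r : ℝ} (hr : 0 ≤ r) :
    (r • M).PosSemidef := by
  refine ⟨?_, fun x => ?_⟩
  · rw [Matrix.IsHermitian, Matrix.conjTranspose_smul, h.1, star_trivial]
  · exact (h.smul hr).2 x

end Aux

section Kron

variable {m n : Type*} [Fintype m] [Fintype n] [DecidableEq m] [DecidableEq n]

lemma aux_psd_kron {P : Matrix m m ℝ} {Q : Matrix n n ℝ}
    (hP : P.PosSemidef) (hQ : Q.PosSemidef) : (P ⊗ₖ Q).PosSemidef := by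
  exact hP.kronecker hQ

lemma aux_kron_eig {A : Matrix m m ℝ} {B : Matrix n n ℝ} {μ ν : ℝ}
    (hA : A.HasRealEigenvalue μ) (hB : B.HasRealEigenvalue ν) :
    (A ⊗ₖ B).HasRealEigenvalue (μ * ν) := by
  obtain ⟨v, hv0, hv⟩ := hA
  obtain ⟨w, hw0, hw⟩ := hB
  refine ⟨fun p => v p.1 * w p.2, ?_, ?_⟩
  · obtain ⟨i, hi⟩ := Function.ne_iff.mp hv0
    obtain ⟨j, hj⟩ := Function.ne_iff.mp hw0
    exact Function.ne_iff.mpr ⟨(i, j), mul_ne_zero hi hj⟩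
  · funext p
    have h1 : ∑ q : m × n, A p.1 q.1 * B p.2 q.2 * (v q.1 * w q.2)
        = (∑ i, A p.1 i * v i) * (∑ j, B p.2 j * w j) := by
      rw [Fintype.sum_prod_type, Finset.sum_mul_sum]
      exact Finset.sum_congr rfl fun i _ => Finset.sum_congr rfl fun j _ => by ring
    have h2 : (∑ i, A p.1 i * v i) = μ * v p.1 := by
      have := congrFun hv p.1
      simpa [Matrix.mulVec, dotProduct] using this
    have h3 : (∑ j, B p.2 j * w j) = ν * w p.2 := by
      have := congrFun hw p.2
      simpa [Matrix.mulVec, dotProduct] using this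
    show ∑ q : m × n, (A ⊗ₖ B) p q * (v q.1 * w q.2) = _
    simp only [Matrix.kroneckerMap_apply]
    rw [h1, h2, h3]
    show _ = (μ * ν) * (v p.1 * w p.2)
    ring

end Kron

/-- **Minimal eigenvalue of a Kronecker product.** Let `A`, `B` be real symmetric matrices
whose eigenvalues lie in `[a, 1]` resp. `[b, 1]`, with `a`, `1` eigenvalues of `A` and
`b`, `1` eigenvalues of `B`. Then the smallest eigenvalue of `A ⊗ B` equals `a·b` if
`a ≥ 0` and `b ≥ 0`, and equals `min a b` otherwise. -/
theorem kronecker_min_eigenvalue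
    {m n : ℕ} (hm : 1 ≤ m) (hn : 1 ≤ n)
    (A : Matrix (Fin m) (Fin m) ℝ) (B : Matrix (Fin n) (Fin n) ℝ)
    (hAsymm : A.IsSymm) (hBsymm : B.IsSymm) (a b : ℝ)
    (hAbound : ∀ l : ℝ, A.HasRealEigenvalue l → a ≤ l ∧ l ≤ 1)
    (hAa : A.HasRealEigenvalue a) (hA1 : A.HasRealEigenvalue 1)
    (hBbound : ∀ l : ℝ, B.HasRealEigenvalue l → b ≤ l ∧ l ≤ 1)
    (hBb : B.HasRealEigenvalue b) (hB1 : B.HasRealEigenvalue 1) :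
    (A ⊗ₖ B).HasRealEigenvalue (if 0 ≤ a ∧ 0 ≤ b then a * b else min a b) ∧
      ∀ l : ℝ, (A ⊗ₖ B).HasRealEigenvalue l →
        (if 0 ≤ a ∧ 0 ≤ b then a * b else min a b) ≤ l := by
  set c : ℝ := if 0 ≤ a ∧ 0 ≤ b then a * b else min a b with hc
  have ha1 : a ≤ 1 := (hAbound a hAa).2
  have hb1 : b ≤ 1 := (hBbound b hBb).2
  have hAH : A.IsHermitian := aux_isHermitian hAsymm
  have hBH : B.IsHermitian := aux_isHermitian hBsymm
  have hP1 : (A - a • 1).PosSemidef := by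
    refine aux_psd_of_eig (hAH.sub (aux_herm_smul_one a)) fun l hl => ?_
    have := (hAbound _ (aux_shift hl)).1
    linarith
  have hP2 : ((1 : Matrix (Fin m) (Fin m) ℝ) - A).PosSemidef := by
    refine aux_psd_of_eig (Matrix.isHermitian_one.sub hAH) fun l hl => ?_
    have := (hAbound _ (aux_shift2 hl)).2
    linarith
  have hQ1 : (B - b • 1).PosSemidef := by
    refine aux_psd_of_eig (hBH.sub (aux_herm_smul_one b)) fun l hl => ?_
    have := (hBbound _ (aux_shift hl)).1
    linarith
  have hQ2 : ((1 : Matrix (Fin n) (Fin n) ℝ) - B).PosSemidef := by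
    refine aux_psd_of_eig (Matrix.isHermitian_one.sub hBH) fun l hl => ?_
    have := (hBbound _ (aux_shift2 hl)).2
    linarith
  have hcle1 : c ≤ 1 := by
    rw [hc]; split_ifs with h
    · nlinarith [h.1, h.2]
    · exact min_le_of_left_le ha1
  have hclea : c ≤ a := by
    rw [hc]; split_ifs with h
    · nlinarith [h.1]
    · exact min_le_left _ _
  have hcleb : c ≤ b := by
    rw [hc]; split_ifs with h
    · nlinarith [h.2]
    · exact min_le_right _ _
  have hcleab : c ≤ a * b := by
    rw [hc]; split_ifs with h
    · exact le_refl _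
    · rcases not_and_or.mp h with ha | hb
      · push_neg at ha
        have : a ≤ a * b := by nlinarith
        exact le_trans (min_le_left a b) this
      · push_neg at hb
        have : b ≤ a * b := by nlinarith
        exact le_trans (min_le_right a b) this
  have hpsd : (A ⊗ₖ B - c • 1).PosSemidef := by
    by_cases haa : a = 1
    · have hA0 : A - (1 : ℝ) • 1 = 0 := by
        refine aux_eq_zero_of_eig (hAH.sub (aux_herm_smul_one 1)) fun l hl => ?_
        have h' := hAbound _ (aux_shift hl)
        have h1 := h'.1
        have h2 := h'.2
        linarith
      have hA_eq : A = 1 := by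
        have := sub_eq_zero.mp hA0
        rwa [one_smul] at this
      have hcb : c = b := by
        rw [hc]
        by_cases hb0 : 0 ≤ b
        · rw [if_pos ⟨by rw [haa]; exact zero_le_one, hb0⟩, haa, one_mul]
        · rw [if_neg fun hcontra => hb0 hcontra.2, haa, min_eq_right hb1]
      rw [hA_eq, hcb]
      have hident : (1 : Matrix (Fin m) (Fin m) ℝ) ⊗ₖ B - b • 1
          = (1 : Matrix (Fin m) (Fin m) ℝ) ⊗ₖ (B - b • 1) := by
        ext ⟨i, j⟩ ⟨p, q⟩
        simp only [Matrix.sub_apply, Matrix.smul_apply, Matrix.kroneckerMap_apply,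
          Matrix.one_apply, Prod.mk.injEq, smul_eq_mul]
        by_cases hip : i = p <;> by_cases hjq : j = q <;> simp [hip, hjq]
      rw [hident]
      exact aux_psd_kron Matrix.PosSemidef.one hQ1
    · by_cases hbb : b = 1
      · have hB0 : B - (1 : ℝ) • 1 = 0 := by
          refine aux_eq_zero_of_eig (hBH.sub (aux_herm_smul_one 1)) fun l hl => ?_
          have h' := hBbound _ (aux_shift hl)
          have h1 := h'.1
          have h2 := h'.2
          linarith
        have hB_eq : B = 1 := by
          have := sub_eq_zero.mp hB0
          rwa [one_smul] at this
        have hca : c = a := by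
          rw [hc]
          by_cases ha0 : 0 ≤ a
          · rw [if_pos ⟨ha0, by rw [hbb]; exact zero_le_one⟩, hbb, mul_one]
          · rw [if_neg fun hcontra => ha0 hcontra.1, hbb, min_eq_left ha1]
        rw [hB_eq, hca]
        have hident : A ⊗ₖ (1 : Matrix (Fin n) (Fin n) ℝ) - a • 1
            = (A - a • 1) ⊗ₖ (1 : Matrix (Fin n) (Fin n) ℝ) := by
          ext ⟨i, j⟩ ⟨p, q⟩
          simp only [Matrix.sub_apply, Matrix.smul_apply, Matrix.kroneckerMap_apply,
            Matrix.one_apply, Prod.mk.injEq, smul_eq_mul]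
          by_cases hip : i = p <;> by_cases hjq : j = q <;> simp [hip, hjq]
        rw [hident]
        exact aux_psd_kron hP1 Matrix.PosSemidef.one
      · have ha' : a < 1 := lt_of_le_of_ne ha1 haa
        have hb' : b < 1 := lt_of_le_of_ne hb1 hbb
        have hD : (0 : ℝ) < (1 - a) * (1 - b) := mul_pos (by linarith) (by linarith)
        have hD0 : ((1 : ℝ) - a) * (1 - b) ≠ 0 := ne_of_gt hD
        have hiden : A ⊗ₖ B - c • 1 =
            ((1 - c) / ((1 - a) * (1 - b))) • ((A - a • 1) ⊗ₖ (B - b • 1)) +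
            ((b - c) / ((1 - a) * (1 - b))) • ((A - a • 1) ⊗ₖ ((1 : Matrix (Fin n) (Fin n) ℝ) - B)) +
            ((a - c) / ((1 - a) * (1 - b))) • (((1 : Matrix (Fin m) (Fin m) ℝ) - A) ⊗ₖ (B - b • 1)) +
            ((a * b - c) / ((1 - a) * (1 - b))) • (((1 : Matrix (Fin m) (Fin m) ℝ) - A) ⊗ₖ ((1 : Matrix (Fin n) (Fin n) ℝ) - B)) := by
          ext ⟨i, j⟩ ⟨p, q⟩
          simp only [Matrix.sub_apply, Matrix.add_apply, Matrix.smul_apply,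
            Matrix.kroneckerMap_apply, Matrix.one_apply, Prod.mk.injEq, smul_eq_mul]
          by_cases hip : i = p <;> by_cases hjq : j = q <;>
            simp only [hip, hjq, if_true, if_false, and_true, and_false, true_and, false_and,
              if_neg, mul_one, mul_zero, sub_zero] <;>
            field_simp <;> ring
        rw [hiden]
        have c1 : (0:ℝ) ≤ (1 - c) / ((1 - a) * (1 - b)) := div_nonneg (by linarith) hD.le
        have c2 : (0:ℝ) ≤ (b - c) / ((1 - a) * (1 - b)) := div_nonneg (by linarith) hD.le
        have c3 : (0:ℝ) ≤ (a - c) / ((1 - a) * (1 - b)) := div_nonneg (by linarith) hD.le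
        have c4 : (0:ℝ) ≤ (a * b - c) / ((1 - a) * (1 - b)) := div_nonneg (by linarith) hD.le
        have k1 := aux_psd_smul (aux_psd_kron hP1 hQ1) c1
        have k2 := aux_psd_smul (aux_psd_kron hP1 hQ2) c2
        have k3 := aux_psd_smul (aux_psd_kron hP2 hQ1) c3
        have k4 := aux_psd_smul (aux_psd_kron hP2 hQ2) c4
        exact ((k1.add k2).add k3).add k4
  constructor
  · rw [hc]; split_ifs with h
    · exact aux_kron_eig hAa hBb
    · rcases le_total a b with hab | hab
      · rw [min_eq_left hab]
        have := aux_kron_eig hAa hB1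
        rwa [mul_one] at this
      · rw [min_eq_right hab]
        have := aux_kron_eig hA1 hBb
        rwa [one_mul] at this
  · exact fun l hl => aux_eig_ge hpsd hl
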